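/- If a real number C satisfies γ(a, |C/b|^{1/a}) = Sgn(C)·((k₂ − k₁)/(k₁ + k₂))·Γ(a), then the ratio of the minimized to the unshifted expected loss satisfies (∫ L(z + C)·f(z) dz) / (∫ L(z)·f(z) dz) = Γ-upper(2a, |C/b|^{1/a}) / Γ(2a). -/

import Mathlib

open Real MeasureTheory Filter

/-- The asymmetric loss function. -/
noncomputable def asymLoss (k₁ k₂ z : ℝ) : ℝ := if 0 ≤ z then k₁ * z else -k₂ * z

/-- The generalized Gaussian density with mean zero. -/
noncomputable def genGauss (a b z : ℝ) : ℝ :=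
  (2 * a * b * Real.Gamma a)⁻¹ * Real.exp (-(|z / b| ^ (1 / a)))

/-- The lower incomplete gamma function. -/
noncomputable def lowerGamma (p x : ℝ) : ℝ := ∫ t in (0:ℝ)..x, t ^ (p - 1) * Real.exp (-t)

/-- The upper incomplete gamma function. -/
noncomputable def upperGamma (p x : ℝ) : ℝ := ∫ t in Set.Ioi x, t ^ (p - 1) * Real.exp (-t)

/-- The sign function used in the paper: `1` for `c ≥ 0`, `-1` for `c < 0`. -/
noncomputable def Sgn (c : ℝ) : ℝ := if 0 ≤ c then 1 else -1

open Set

section Aux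

variable {a b : ℝ}

lemma img_Ioc (ha : 0 < a) (hb : 0 < b) {x : ℝ} (hx : 0 ≤ x) :
    (fun t : ℝ => b * t ^ a) '' Ioc 0 x = Ioc 0 (b * x ^ a) := by
  ext z
  constructor
  · rintro ⟨t, ⟨ht0, htx⟩, rfl⟩
    exact ⟨by positivity, by
      have := Real.rpow_le_rpow ht0.le htx ha.le
      calc b * t ^ a ≤ b * x ^ a := by nlinarith [Real.rpow_nonneg ht0.le a]
        _ = b * x ^ a := rfl⟩
  · rintro ⟨hz0, hzx⟩
    refine ⟨(z / b) ^ a⁻¹, ⟨by positivity, ?_⟩, ?_⟩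
    · have h1 : z / b ≤ x ^ a := (div_le_iff₀' hb).2 hzx
      calc (z / b) ^ a⁻¹ ≤ (x ^ a) ^ a⁻¹ :=
            Real.rpow_le_rpow (by positivity) h1 (by positivity)
        _ = x := Real.rpow_rpow_inv hx ha.ne'
    · show b * ((z / b) ^ a⁻¹) ^ a = z
      rw [Real.rpow_inv_rpow (by positivity) ha.ne']
      field_simp

lemma img_Ioi (ha : 0 < a) (hb : 0 < b) {x : ℝ} (hx : 0 ≤ x) :
    (fun t : ℝ => b * t ^ a) '' Ioi x = Ioi (b * x ^ a) := by
  ext z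
  constructor
  · rintro ⟨t, htx, rfl⟩
    have ht0 : 0 ≤ t := hx.trans htx.le
    have := Real.rpow_lt_rpow hx htx ha
    exact (mul_lt_mul_iff_right₀ hb).2 this
  · intro hz
    have hz0 : 0 < z := lt_of_le_of_lt (by positivity) hz
    refine ⟨(z / b) ^ a⁻¹, ?_, ?_⟩
    · have h1 : x ^ a < z / b := (lt_div_iff₀' hb).2 hz
      calc x = (x ^ a) ^ a⁻¹ := (Real.rpow_rpow_inv hx ha.ne').symm
        _ < (z / b) ^ a⁻¹ := Real.rpow_lt_rpow (by positivity) h1 (by positivity)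
    · show b * ((z / b) ^ a⁻¹) ^ a = z
      rw [Real.rpow_inv_rpow (by positivity) ha.ne']
      field_simp

lemma hasDeriv_sub (hb : 0 < b) {s : Set ℝ} (hsub : s ⊆ Ioi 0) :
    ∀ t ∈ s, HasDerivWithinAt (fun t : ℝ => b * t ^ a) (a * b * t ^ (a - 1)) s t := by
  intro t ht
  have ht0 : (t:ℝ) ≠ 0 := (hsub ht).ne'
  have := ((Real.hasDerivAt_rpow_const (x := t) (p := a) (Or.inl ht0)).const_mul b)
  rw [show a * b * t ^ (a - 1) = b * (a * t ^ (a - 1)) by ring]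
  exact this.hasDerivWithinAt

lemma inj_sub (ha : 0 < a) (hb : 0 < b) {s : Set ℝ} (hsub : s ⊆ Ioi 0) :
    InjOn (fun t : ℝ => b * t ^ a) s := by
  intro t ht u hu htu
  have h1 : 0 ≤ t := (hsub ht).le
  have h2 : 0 ≤ u := (hsub hu).le
  have h3 : t ^ a = u ^ a := by
    field_simp at htu
    exact htu
  have := congrArg (fun y => y ^ a⁻¹) h3
  simpa [Real.rpow_rpow_inv h1 ha.ne', Real.rpow_rpow_inv h2 ha.ne'] using this

lemma gamma_int (p : ℝ) (hp : 0 < p) :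
    IntegrableOn (fun t : ℝ => t ^ (p - 1) * Real.exp (-t)) (Ioi 0) :=
  (Real.GammaIntegral_convergent hp).congr_fun (fun _ _ => mul_comm _ _) measurableSet_Ioi

lemma integrand_eq (ha : 0 < a) (hb : 0 < b) (c : ℝ) {t : ℝ} (ht : 0 < t) :
    (a * b * t ^ (a - 1)) * ((b * t ^ a) ^ c * Real.exp (-((b * t ^ a / b) ^ (1 / a))))
      = (a * b ^ (c + 1)) * (t ^ (a * (1 + c) - 1) * Real.exp (-t)) := by
  have h1 : b * t ^ a / b = t ^ a := by field_simp
  rw [h1, one_div, Real.rpow_rpow_inv ht.le ha.ne',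
    Real.mul_rpow hb.le (Real.rpow_nonneg ht.le a)]
  rw [show a * (1 + c) - 1 = (a - 1) + a * c by ring, Real.rpow_add ht,
    Real.rpow_add hb c 1, Real.rpow_one, ← Real.rpow_mul ht.le]
  ring

lemma img_zero (ha : 0 < a) (hb : 0 < b) :
    (fun t : ℝ => b * t ^ a) '' Ioi 0 = Ioi 0 := by
  rw [img_Ioi ha hb le_rfl, Real.zero_rpow ha.ne', mul_zero]

lemma int_pow (ha : 0 < a) (hb : 0 < b) (c : ℝ) (hc : 0 ≤ c) :
    IntegrableOn (fun z : ℝ => z ^ c * Real.exp (-((z / b) ^ (1 / a)))) (Ioi 0) := by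
  rw [show Ioi (0:ℝ) = (fun t : ℝ => b * t ^ a) '' Ioi 0 from (img_zero ha hb).symm,
    integrableOn_image_iff_integrableOn_abs_deriv_smul measurableSet_Ioi
      (hasDeriv_sub hb fun _ h => h) (inj_sub ha hb fun _ h => h)]
  refine IntegrableOn.congr_fun ((gamma_int (a * (1 + c)) (by positivity)).const_mul
    (a * b ^ (c + 1))) (fun t ht => ?_) measurableSet_Ioi
  have ht0 : (0:ℝ) < t := ht
  rw [smul_eq_mul, abs_of_pos (by positivity)]
  exact (integrand_eq ha hb c ht0).symm

lemma sub_gen' (ha : 0 < a) (hb : 0 < b) (g : ℝ → ℝ) {s : Set ℝ}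
    (hs : MeasurableSet s) (hsub : s ⊆ Ioi 0) :
    ∫ z in (fun t : ℝ => b * t ^ a) '' s, g z
      = ∫ t in s, (a * b * t ^ (a - 1)) * g (b * t ^ a) := by
  rw [integral_image_eq_integral_abs_deriv_smul hs (hasDeriv_sub hb hsub) (inj_sub ha hb hsub) g]
  refine setIntegral_congr_fun hs fun t ht => ?_
  have ht0 : 0 < t := hsub ht
  rw [smul_eq_mul, abs_of_pos (by positivity)]

lemma eval_img (ha : 0 < a) (hb : 0 < b) (c : ℝ) {s : Set ℝ}
    (hs : MeasurableSet s) (hsub : s ⊆ Ioi 0) :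
    ∫ z in (fun t : ℝ => b * t ^ a) '' s, z ^ c * Real.exp (-((z / b) ^ (1 / a)))
      = (a * b ^ (c + 1)) * ∫ t in s, t ^ (a * (1 + c) - 1) * Real.exp (-t) := by
  rw [sub_gen' ha hb _ hs hsub, ← integral_const_mul]
  exact setIntegral_congr_fun hs fun t ht => integrand_eq ha hb c (hsub ht)

lemma reflect_int {g : ℝ → ℝ} {c : ℝ} (h : IntegrableOn (fun z => g (-z)) (Ici (-c))) :
    IntegrableOn g (Iic c) := by
  have A : MeasurableEmbedding (fun x : ℝ => -x) :=
    (Homeomorph.neg ℝ).isClosedEmbedding.measurableEmbedding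
  have hmap : (volume : Measure ℝ) = Measure.map (fun x : ℝ => -x) volume :=
    (Measure.map_neg_eq_self _).symm
  rw [IntegrableOn, hmap, ← IntegrableOn, A.integrableOn_map_iff]
  simpa [neg_preimage, neg_Iic, Function.comp_def] using h

lemma gamma_split (p : ℝ) (hp : 0 < p) {x : ℝ} (hx : 0 ≤ x) :
    lowerGamma p x + upperGamma p x = Real.Gamma p := by
  rw [Real.Gamma_eq_integral hp, lowerGamma, intervalIntegral.integral_of_le hx, upperGamma,
    ← setIntegral_union (Ioc_disjoint_Ioi le_rfl) measurableSet_Ioi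
      ((gamma_int p hp).mono_set Ioc_subset_Ioi_self)
      ((gamma_int p hp).mono_set (Ioi_subset_Ioi hx)), Ioc_union_Ioi_eq_Ioi hx]
  exact setIntegral_congr_fun measurableSet_Ioi fun t _ => mul_comm _ _

lemma upperGamma_zero (p : ℝ) (hp : 0 < p) : upperGamma p 0 = Real.Gamma p := by
  have := gamma_split p hp (le_refl (0:ℝ))
  rwa [lowerGamma, intervalIntegral.integral_same, zero_add] at this

lemma asymLoss_nonpos {k₁ k₂ w : ℝ} (hw : w ≤ 0) : asymLoss k₁ k₂ w = -k₂ * w := by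
  unfold asymLoss
  split_ifs with h
  · have : w = 0 := le_antisymm hw h
    simp [this]
  · rfl

lemma asymLoss_nonneg {k₁ k₂ w : ℝ} (hw : 0 ≤ w) : asymLoss k₁ k₂ w = k₁ * w := by
  unfold asymLoss; rw [if_pos hw]

lemma asymLoss_neg (k₁ k₂ w : ℝ) : asymLoss k₂ k₁ (-w) = asymLoss k₁ k₂ w := by
  unfold asymLoss
  split_ifs with h1 h2 h2
  · have : w = 0 := le_antisymm (neg_nonneg.1 h1) h2
    simp [this]
  · ring
  · ring
  · exfalso; push_neg at h1 h2; linarith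

lemma genGauss_even (a b z : ℝ) : genGauss a b (-z) = genGauss a b z := by
  rw [genGauss, genGauss, neg_div, abs_neg]

end Aux

section Main

variable {a b k₁ k₂ : ℝ}

lemma main_integral (ha : 0 < a) (hb : 0 < b) (C : ℝ) (hC0 : 0 ≤ C)
    (hbal : C * (2 * k₁ * lowerGamma a ((C / b) ^ (1 / a))
      + (k₁ - k₂) * upperGamma a ((C / b) ^ (1 / a))) = 0) :
    ∫ z, asymLoss k₁ k₂ (z + C) * genGauss a b z
      = ((k₁ + k₂) * ((2 * a * b * Real.Gamma a)⁻¹ * (a * b ^ ((1:ℝ) + 1))))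
        * upperGamma (2 * a) ((C / b) ^ (1 / a)) := by
  have hΓa := Real.Gamma_pos_of_pos ha
  set c0 : ℝ := (2 * a * b * Real.Gamma a)⁻¹ with hc0
  set x : ℝ := (C / b) ^ (1 / a) with hxdef
  have hx : 0 ≤ x := Real.rpow_nonneg (by positivity) _
  have hbx : b * x ^ a = C := by
    rw [hxdef, one_div, Real.rpow_inv_rpow (by positivity) ha.ne']
    field_simp
  -- basic integrability
  have hE0 : IntegrableOn (fun z : ℝ => Real.exp (-((z / b) ^ (1 / a)))) (Ioi 0) := by
    simpa using int_pow ha hb 0 le_rfl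
  have hE1 : IntegrableOn (fun z : ℝ => z * Real.exp (-((z / b) ^ (1 / a)))) (Ioi 0) := by
    simpa using int_pow ha hb 1 zero_le_one
  have ggpos : EqOn (fun z : ℝ => c0 * Real.exp (-((z / b) ^ (1 / a)))) (genGauss a b) (Ioi 0) := by
    intro z hz
    rw [genGauss, abs_of_nonneg (div_nonneg (le_of_lt hz) hb.le)]
  have hgg_Ioi : IntegrableOn (genGauss a b) (Ioi 0) :=
    IntegrableOn.congr_fun (hE0.const_mul c0) ggpos measurableSet_Ioi
  have hzgg_Ioi : IntegrableOn (fun z => z * genGauss a b z) (Ioi 0) := by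
    refine IntegrableOn.congr_fun (hE1.const_mul c0) (fun z hz => ?_) measurableSet_Ioi
    rw [← ggpos hz]; ring
  have hgg_Iic : IntegrableOn (genGauss a b) (Iic 0) := by
    apply reflect_int
    rw [neg_zero, integrableOn_Ici_iff_integrableOn_Ioi]
    simpa [genGauss_even] using hgg_Ioi
  have hzgg_Iic : IntegrableOn (fun z => z * genGauss a b z) (Iic 0) := by
    apply reflect_int
    rw [neg_zero, integrableOn_Ici_iff_integrableOn_Ioi]
    have hneg : IntegrableOn (fun z => -(z * genGauss a b z)) (Ioi 0) := hzgg_Ioi.neg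
    refine IntegrableOn.congr_fun hneg (fun z _ => ?_) measurableSet_Ioi
    rw [genGauss_even]; ring
  have hgg : Integrable (genGauss a b) := by
    rw [← integrableOn_univ, ← Iic_union_Ioi (a := (0:ℝ))]
    exact hgg_Iic.union hgg_Ioi
  have hzgg : Integrable (fun z => z * genGauss a b z) := by
    rw [← integrableOn_univ, ← Iic_union_Ioi (a := (0:ℝ))]
    exact hzgg_Iic.union hzgg_Ioi
  have hlin : ∀ p q : ℝ, Integrable (fun z => (p * z + q) * genGauss a b z) := by
    intro p q
    have h : Integrable (fun z => p * (z * genGauss a b z) + q * genGauss a b z) :=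
      (hzgg.const_mul p).add (hgg.const_mul q)
    have heq : (fun z => p * (z * genGauss a b z) + q * genGauss a b z)
        = fun z => (p * z + q) * genGauss a b z := funext fun z => by ring
    rwa [heq] at h
  -- evenness consequences
  have int_all_gg : ∫ z, genGauss a b z = 2 * ∫ z in Ioi 0, genGauss a b z := by
    have h := (intervalIntegral.integral_Iic_add_Ioi (b := (0:ℝ)) hgg.integrableOn hgg.integrableOn).symm
    have h2 : ∫ z in Iic (0:ℝ), genGauss a b z = ∫ z in Ioi (0:ℝ), genGauss a b z := by
      have h3 := integral_comp_neg_Iic (0:ℝ) (genGauss a b)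
      rw [neg_zero] at h3
      rw [← h3]
      exact setIntegral_congr_fun measurableSet_Iic fun z _ => (genGauss_even a b z).symm
    rw [h, h2]; ring
  have int_all_zgg : ∫ z, z * genGauss a b z = 0 := by
    have h := integral_neg_eq_self (fun z => z * genGauss a b z) volume
    simp only [genGauss_even, neg_mul] at h
    have h2 : ∫ z, -(z * genGauss a b z) = ∫ z, z * genGauss a b z := h
    rw [integral_neg] at h2
    linarith
  -- value computations
  have val_Ioc : ∀ c : ℝ, 0 ≤ c → ∫ z in Ioc 0 C, z ^ c * genGauss a b z
      = c0 * ((a * b ^ (c + 1)) * ∫ t in Ioc 0 x, t ^ (a * (1 + c) - 1) * Real.exp (-t)) := by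
    intro c hc
    have h1 : ∫ z in Ioc 0 C, z ^ c * genGauss a b z
        = ∫ z in Ioc 0 C, c0 * (z ^ c * Real.exp (-((z / b) ^ (1 / a)))) := by
      refine setIntegral_congr_fun measurableSet_Ioc fun z hz => ?_
      rw [← ggpos hz.1]; ring
    rw [h1, integral_const_mul, ← hbx, ← img_Ioc ha hb hx,
      eval_img ha hb c measurableSet_Ioc (fun t ht => ht.1)]
  have val_Ioi : ∀ c : ℝ, 0 ≤ c → ∫ z in Ioi C, z ^ c * genGauss a b z
      = c0 * ((a * b ^ (c + 1)) * ∫ t in Ioi x, t ^ (a * (1 + c) - 1) * Real.exp (-t)) := by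
    intro c hc
    have h1 : ∫ z in Ioi C, z ^ c * genGauss a b z
        = ∫ z in Ioi C, c0 * (z ^ c * Real.exp (-((z / b) ^ (1 / a)))) := by
      refine setIntegral_congr_fun measurableSet_Ioi fun z hz => ?_
      have hz0 : 0 < z := lt_of_le_of_lt hC0 hz
      rw [← ggpos hz0]; ring
    rw [h1, integral_const_mul, ← hbx, ← img_Ioi ha hb hx,
      eval_img ha hb c measurableSet_Ioi (fun t ht => lt_of_le_of_lt hx ht)]
  have A2 : ∫ z in Ioi C, z * genGauss a b z
      = c0 * ((a * b ^ ((1:ℝ) + 1)) * upperGamma (2 * a) x) := by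
    have := val_Ioi 1 zero_le_one
    simp only [Real.rpow_one] at this
    rw [this, upperGamma, show a * (1 + 1) - 1 = 2 * a - 1 by ring]
  have A3 : ∫ z in Ioc 0 C, genGauss a b z = c0 * ((a * b) * lowerGamma a x) := by
    have := val_Ioc 0 le_rfl
    simp only [Real.rpow_zero, one_mul, zero_add, Real.rpow_one] at this
    rw [this, lowerGamma, intervalIntegral.integral_of_le hx,
      show a * (1 + 0) - 1 = a - 1 by ring]
  have A4 : ∫ z in Ioi C, genGauss a b z = c0 * ((a * b) * upperGamma a x) := by
    have := val_Ioi 0 le_rfl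
    simp only [Real.rpow_zero, one_mul, zero_add, Real.rpow_one] at this
    rw [this, upperGamma, show a * (1 + 0) - 1 = a - 1 by ring]
  have hIoi0 : ∫ z in Ioi (0:ℝ), genGauss a b z
      = (∫ z in Ioc 0 C, genGauss a b z) + ∫ z in Ioi C, genGauss a b z := by
    rw [← setIntegral_union (Ioc_disjoint_Ioi le_rfl) measurableSet_Ioi
      (hgg.integrableOn) (hgg.integrableOn), Ioc_union_Ioi_eq_Ioi hC0]
  -- reflection of the left piece
  have key_reflect : ∫ z in Iic (-C), (z + C) * genGauss a b z
      = ∫ z in Ioi C, (C - z) * genGauss a b z := by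
    have h := integral_comp_neg_Iic (-C) (fun x => (C - x) * genGauss a b x)
    rw [neg_neg] at h
    rw [← h]
    refine setIntegral_congr_fun measurableSet_Iic fun z _ => ?_
    rw [genGauss_even]; ring
  have Rval : ∫ z in Iic (-C), (z + C) * genGauss a b z
      = C * (∫ z in Ioi C, genGauss a b z) - ∫ z in Ioi C, z * genGauss a b z := by
    rw [key_reflect]
    have h : (fun z => (C - z) * genGauss a b z)
        = fun z => C * genGauss a b z - z * genGauss a b z := funext fun z => by ring
    rw [h, integral_sub ((hgg.integrableOn).const_mul C) (hzgg.integrableOn), integral_const_mul]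
  -- total integral of (z + C) * gg
  have S0 : ∫ z, (z + C) * genGauss a b z = C * (2 * ∫ z in Ioi 0, genGauss a b z) := by
    have h : (fun z => (z + C) * genGauss a b z)
        = fun z => z * genGauss a b z + C * genGauss a b z := funext fun z => by ring
    rw [h, integral_add hzgg (hgg.const_mul C), int_all_zgg, integral_const_mul, int_all_gg]
    ring
  have Sval : ∫ z in Ioi (-C), (z + C) * genGauss a b z
      = (∫ z, (z + C) * genGauss a b z) - ∫ z in Iic (-C), (z + C) * genGauss a b z := by
    have hint : Integrable (fun z => (z + C) * genGauss a b z) := by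
      simpa [one_mul] using hlin 1 C
    have := intervalIntegral.integral_Iic_add_Ioi (b := -C) hint.integrableOn hint.integrableOn
    linarith
  -- split the main integral
  have hint1 : Integrable (fun z => asymLoss k₁ k₂ (z + C) * genGauss a b z) := by
    rw [← integrableOn_univ, ← Iic_union_Ioi (a := -C)]
    refine IntegrableOn.union ?_ ?_
    · refine ((hlin (-k₂) (-k₂ * C)).integrableOn).congr_fun (fun z hz => ?_) measurableSet_Iic
      rw [asymLoss_nonpos (by linarith [mem_Iic.1 hz] : z + C ≤ 0)]
      ring
    · refine ((hlin k₁ (k₁ * C)).integrableOn).congr_fun (fun z hz => ?_) measurableSet_Ioi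
      rw [asymLoss_nonneg (by linarith [mem_Ioi.1 hz] : (0:ℝ) ≤ z + C)]
      ring
  have hsplit : ∫ z, asymLoss k₁ k₂ (z + C) * genGauss a b z
      = (-k₂) * (∫ z in Iic (-C), (z + C) * genGauss a b z)
        + k₁ * ∫ z in Ioi (-C), (z + C) * genGauss a b z := by
    rw [← intervalIntegral.integral_Iic_add_Ioi (b := -C) hint1.integrableOn hint1.integrableOn]
    congr 1
    · rw [← integral_const_mul]
      refine setIntegral_congr_fun measurableSet_Iic fun z hz => ?_
      rw [asymLoss_nonpos (by linarith [mem_Iic.1 hz] : z + C ≤ 0)]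
      ring
    · rw [← integral_const_mul]
      refine setIntegral_congr_fun measurableSet_Ioi fun z hz => ?_
      rw [asymLoss_nonneg (by linarith [mem_Ioi.1 hz] : (0:ℝ) ≤ z + C)]
      ring
  rw [hsplit, Sval, S0, Rval, hIoi0, A2, A3, A4]
  rw [hxdef] at hbal ⊢
  linear_combination ((2 * a * b * Real.Gamma a)⁻¹ * a * b) * hbal

end Main

theorem expected_loss_ratio (a b k₁ k₂ : ℝ) (ha : 0 < a) (hb : 0 < b)
    (hk₁ : 0 < k₁) (hk₂ : 0 < k₂) (C : ℝ)
    (hC : lowerGamma a (|C / b| ^ (1 / a)) = Sgn C * ((k₂ - k₁) / (k₁ + k₂)) * Real.Gamma a) :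
    (∫ z, asymLoss k₁ k₂ (z + C) * genGauss a b z)
      / (∫ z, asymLoss k₁ k₂ z * genGauss a b z) =
      upperGamma (2 * a) (|C / b| ^ (1 / a)) / Real.Gamma (2 * a) := by
  have hΓa := Real.Gamma_pos_of_pos ha
  have hΓ2a := Real.Gamma_pos_of_pos (by linarith : (0:ℝ) < 2 * a)
  have hks : k₁ + k₂ ≠ 0 := by positivity
  set K : ℝ := (k₁ + k₂) * ((2 * a * b * Real.Gamma a)⁻¹ * (a * b ^ ((1:ℝ) + 1))) with hK
  have hKpos : 0 < K := by
    have : (0:ℝ) < b ^ ((1:ℝ) + 1) := Real.rpow_pos_of_pos hb _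
    positivity
  have hzero : ((0:ℝ) / b) ^ (1 / a) = 0 := by
    rw [zero_div, Real.zero_rpow (by positivity : (1:ℝ)/a ≠ 0)]
  -- denominator
  have hD : ∫ z, asymLoss k₁ k₂ z * genGauss a b z = K * Real.Gamma (2 * a) := by
    have h := main_integral (k₁ := k₁) (k₂ := k₂) ha hb 0 le_rfl (by rw [zero_mul])
    simp only [add_zero] at h
    rw [h, hzero, upperGamma_zero (2 * a) (by linarith)]
  rcases le_or_gt 0 C with hC0 | hC0
  · have habs : |C / b| = C / b := abs_of_nonneg (div_nonneg hC0 hb.le)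
    have hSgn : Sgn C = 1 := if_pos hC0
    rw [habs, hSgn, one_mul] at hC
    have hsplitg := gamma_split a ha (x := (C / b) ^ (1 / a))
      (Real.rpow_nonneg (div_nonneg hC0 hb.le) _)
    have hbal : C * (2 * k₁ * lowerGamma a ((C / b) ^ (1 / a))
        + (k₁ - k₂) * upperGamma a ((C / b) ^ (1 / a))) = 0 := by
      have h1 : 2 * k₁ * lowerGamma a ((C / b) ^ (1 / a))
          + (k₁ - k₂) * upperGamma a ((C / b) ^ (1 / a)) = 0 := by
        have hup : upperGamma a ((C / b) ^ (1 / a))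
            = Real.Gamma a - lowerGamma a ((C / b) ^ (1 / a)) := by linarith
        rw [hup, hC]
        field_simp
        ring
      rw [h1, mul_zero]
    have hN := main_integral (k₁ := k₁) (k₂ := k₂) ha hb C hC0 hbal
    rw [habs, hN, hD, ← hK, mul_div_mul_left _ _ hKpos.ne']
  · -- C < 0 : reduce to the symmetric case
    have hC0' : 0 ≤ -C := by linarith
    have habs : |C / b| = -C / b := by
      rw [abs_of_neg (div_neg_of_neg_of_pos hC0 hb), neg_div]
    have hSgn : Sgn C = -1 := if_neg (not_le.2 hC0)
    rw [habs, hSgn] at hC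
    have hsplitg := gamma_split a ha (x := (-C / b) ^ (1 / a))
      (Real.rpow_nonneg (div_nonneg hC0' hb.le) _)
    have hbal : -C * (2 * k₂ * lowerGamma a ((-C / b) ^ (1 / a))
        + (k₂ - k₁) * upperGamma a ((-C / b) ^ (1 / a))) = 0 := by
      have h1 : 2 * k₂ * lowerGamma a ((-C / b) ^ (1 / a))
          + (k₂ - k₁) * upperGamma a ((-C / b) ^ (1 / a)) = 0 := by
        have hup : upperGamma a ((-C / b) ^ (1 / a))
            = Real.Gamma a - lowerGamma a ((-C / b) ^ (1 / a)) := by linarith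
        have hC' : lowerGamma a ((-C / b) ^ (1 / a))
            = ((k₁ - k₂) / (k₁ + k₂)) * Real.Gamma a := by
          rw [hC]; ring
        rw [hup, hC']
        field_simp
        ring
      rw [h1, mul_zero]
    have hN' := main_integral (k₁ := k₂) (k₂ := k₁) ha hb (-C) hC0' hbal
    -- transform the numerator by z ↦ -z
    have hnum : ∫ z, asymLoss k₁ k₂ (z + C) * genGauss a b z
        = ∫ z, asymLoss k₂ k₁ (z + -C) * genGauss a b z := by
      rw [← integral_neg_eq_self (fun z => asymLoss k₂ k₁ (z + -C) * genGauss a b z) volume]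
      refine integral_congr_ae (Eventually.of_forall fun z => ?_)
      show asymLoss k₁ k₂ (z + C) * genGauss a b z
        = asymLoss k₂ k₁ (-z + -C) * genGauss a b (-z)
      rw [genGauss_even, show -z + -C = -(z + C) by ring, asymLoss_neg]
    -- transform the denominator similarly
    have hden : ∫ z, asymLoss k₁ k₂ z * genGauss a b z
        = ∫ z, asymLoss k₂ k₁ z * genGauss a b z := by
      rw [← integral_neg_eq_self (fun z => asymLoss k₂ k₁ z * genGauss a b z) volume]
      refine integral_congr_ae (Eventually.of_forall fun z => ?_)
      show asymLoss k₁ k₂ z * genGauss a b z = asymLoss k₂ k₁ (-z) * genGauss a b (-z)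
      rw [genGauss_even, asymLoss_neg]
    have hD' : ∫ z, asymLoss k₂ k₁ z * genGauss a b z
        = ((k₂ + k₁) * ((2 * a * b * Real.Gamma a)⁻¹ * (a * b ^ ((1:ℝ) + 1))))
          * Real.Gamma (2 * a) := by
      have h := main_integral (k₁ := k₂) (k₂ := k₁) ha hb 0 le_rfl (by rw [zero_mul])
      simp only [add_zero] at h
      rw [h, hzero, upperGamma_zero (2 * a) (by linarith)]
    have hK' : (k₂ + k₁) * ((2 * a * b * Real.Gamma a)⁻¹ * (a * b ^ ((1:ℝ) + 1))) = K := by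
      rw [hK]; ring
    rw [hnum, hden, hN', hD', hK', habs, mul_div_mul_left _ _ hKpos.ne']
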